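/- Suppose a matrix A admits the factorization A = P [[I, 0],[E, I]] [[A₁₁, A₁₂],[0, S]] where P is a permutation matrix and A₁₁ is k×k. Then σ_{k+1}(A) ≤ σ₁(S), where σ_i denotes the i-th largest singular value. -/

import Mathlib

open Matrix BigOperators

/-- Spectral norm of a real matrix, via the operator norm of the induced
Euclidean linear map. -/
noncomputable def specNorm {m n : Type*} [Fintype m] [Fintype n] [DecidableEq n]
    (A : Matrix m n ℝ) : ℝ :=
  ‖(Matrix.toEuclideanLin A).toContinuousLinearMap‖

lemma aux_norm {k m' n' : ℕ} (σ : Equiv.Perm (Fin k ⊕ Fin m'))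
    (S : Matrix (Fin m') (Fin n') ℝ) :
    specNorm ((σ.permMatrix ℝ) * Matrix.fromBlocks (0 : Matrix (Fin k) (Fin k) ℝ) 0 0 S) ≤ specNorm S := by
  set M : Matrix (Fin k ⊕ Fin m') (Fin k ⊕ Fin n') ℝ :=
    (σ.permMatrix ℝ) * Matrix.fromBlocks (0 : Matrix (Fin k) (Fin k) ℝ) 0 0 S with hMdef
  refine ContinuousLinearMap.opNorm_le_bound
    ((Matrix.toEuclideanLin M).toContinuousLinearMap) (norm_nonneg
      ((Matrix.toEuclideanLin S).toContinuousLinearMap)) ?_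
  intro v
  set w : (Fin k ⊕ Fin n') → ℝ := (WithLp.equiv 2 _) v with hw
  set y : EuclideanSpace ℝ (Fin n') := (WithLp.equiv 2 _).symm (fun j => w (Sum.inr j)) with hy
  have hM : M = (Matrix.fromBlocks 0 0 0 S).submatrix σ id := by
    rw [hMdef]; exact PEquiv.toMatrix_toPEquiv_mul σ _
  have hFw : (Matrix.fromBlocks (0 : Matrix (Fin k) (Fin k) ℝ) 0 0 S) *ᵥ w
      = Sum.elim (0 : Fin k → ℝ) (S *ᵥ fun j => w (Sum.inr j)) := by
    rw [Matrix.fromBlocks_mulVec]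
    simp [Function.comp_def]
  have hmv : ∀ i, (M *ᵥ w) i
      = Sum.elim (0 : Fin k → ℝ) (S *ᵥ fun j => w (Sum.inr j)) (σ i) := by
    intro i
    rw [hM, ← hFw]
    rfl
  have hTv : ‖(Matrix.toEuclideanLin M).toContinuousLinearMap v‖
      = ‖(Matrix.toEuclideanLin S).toContinuousLinearMap y‖ := by
    rw [EuclideanSpace.norm_eq, EuclideanSpace.norm_eq]
    congr 1
    have hc : ∀ i, ((Matrix.toEuclideanLin M).toContinuousLinearMap v) i = (M *ᵥ w) i :=
      fun i => rfl
    have hc2 : ∀ j, ((Matrix.toEuclideanLin S).toContinuousLinearMap y) j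
        = (S *ᵥ fun j => w (Sum.inr j)) j := fun j => rfl
    calc ∑ i, ‖((Matrix.toEuclideanLin M).toContinuousLinearMap v) i‖ ^ 2
        = ∑ i, ‖Sum.elim (0 : Fin k → ℝ) (S *ᵥ fun j => w (Sum.inr j)) (σ i)‖ ^ 2 := by
          simp_rw [hc, hmv]
      _ = ∑ i, ‖Sum.elim (0 : Fin k → ℝ) (S *ᵥ fun j => w (Sum.inr j)) i‖ ^ 2 :=
          Equiv.sum_comp σ (fun i => ‖Sum.elim (0 : Fin k → ℝ) (S *ᵥ fun j => w (Sum.inr j)) i‖ ^ 2)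
      _ = ∑ j, ‖((Matrix.toEuclideanLin S).toContinuousLinearMap y) j‖ ^ 2 := by
          rw [Fintype.sum_sum_type]
          simp [hc2]
          rfl
  rw [hTv]
  calc ‖(Matrix.toEuclideanLin S).toContinuousLinearMap y‖
      ≤ ‖(Matrix.toEuclideanLin S).toContinuousLinearMap‖ * ‖y‖ :=
        ContinuousLinearMap.le_opNorm _ _
    _ ≤ ‖(Matrix.toEuclideanLin S).toContinuousLinearMap‖ * ‖v‖ := by
        refine mul_le_mul_of_nonneg_left ?_ (norm_nonneg _)
        rw [EuclideanSpace.norm_eq, EuclideanSpace.norm_eq]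
        apply Real.sqrt_le_sqrt
        have hcy : ∀ j, (y : EuclideanSpace ℝ (Fin n')) j = w (Sum.inr j) := fun j => rfl
        have hcv : ∀ i, (v : EuclideanSpace ℝ (Fin k ⊕ Fin n')) i = w i := fun i => rfl
        simp_rw [hcy, hcv]
        rw [Fintype.sum_sum_type]
        have : (0:ℝ) ≤ ∑ a : Fin k, ‖w (Sum.inl a)‖ ^ 2 :=
          Finset.sum_nonneg fun _ _ => by positivity
        linarith

lemma matrix_eq_zero_of_rank_eq_zero {m n : Type*} [Fintype m] [Fintype n]
    (B : Matrix m n ℝ) (h : B.rank = 0) : B = 0 := by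
  classical
  have h1 : LinearMap.range B.mulVecLin = ⊥ := Submodule.finrank_eq_zero.mp h
  have h2 : B.mulVecLin = 0 := LinearMap.range_eq_bot.mp h1
  ext i j
  have h3 : B.mulVecLin (Pi.single j 1) = 0 := by rw [h2]; rfl
  have h4 := congrFun h3 i
  simpa [Matrix.mulVecLin_apply, Matrix.mulVec_single] using h4

/-- The `i`-th largest singular value (1-indexed), via the Eckart–Young
variational characterization: `σ_i(A) = inf { ‖A − B‖₂ : rank B < i }`. -/
noncomputable def sv {m n : Type*} [Fintype m] [Fintype n] [DecidableEq n]
    (A : Matrix m n ℝ) (i : ℕ) : ℝ :=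
  sInf ((fun B : Matrix m n ℝ => specNorm (A - B)) '' {B | B.rank < i})

/-- If `A = P [[I,0],[E,I]] [[A₁₁,A₁₂],[0,S]]` with `P` a permutation matrix and
`A₁₁` of size `k × k`, then `σ_{k+1}(A) ≤ σ₁(S)`. -/
theorem singularValue_succ_le_schur_complement
    (k m' n' : ℕ)
    (A : Matrix (Fin k ⊕ Fin m') (Fin k ⊕ Fin n') ℝ)
    (P : Matrix (Fin k ⊕ Fin m') (Fin k ⊕ Fin m') ℝ)
    (σ : Equiv.Perm (Fin k ⊕ Fin m')) (hP : P = σ.permMatrix ℝ)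
    (A₁₁ : Matrix (Fin k) (Fin k) ℝ) (A₁₂ : Matrix (Fin k) (Fin n') ℝ)
    (E : Matrix (Fin m') (Fin k) ℝ) (S : Matrix (Fin m') (Fin n') ℝ)
    (hA : A = P * Matrix.fromBlocks 1 0 E 1 * Matrix.fromBlocks A₁₁ A₁₂ 0 S) :
    sv A (k + 1) ≤ sv S 1 := by
  classical
  set L : Matrix (Fin k ⊕ Fin m') (Fin k ⊕ Fin m') ℝ := Matrix.fromBlocks 1 0 E 1 with hL
  set B₀ : Matrix (Fin k ⊕ Fin m') (Fin k ⊕ Fin n') ℝ :=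
    P * L * Matrix.fromBlocks A₁₁ A₁₂ 0 0 with hB0
  -- rank bound
  have h1 : Matrix.fromBlocks A₁₁ A₁₂ (0 : Matrix (Fin m') (Fin k) ℝ)
      (0 : Matrix (Fin m') (Fin n') ℝ)
      = Matrix.fromRows (1 : Matrix (Fin k) (Fin k) ℝ) (0 : Matrix (Fin m') (Fin k) ℝ)
        * Matrix.fromCols A₁₁ A₁₂ := by
    rw [Matrix.fromRows_mul_fromCols]; simp
  have hrank : B₀.rank < k + 1 := by
    have h2 : B₀.rank ≤ (Matrix.fromCols A₁₁ A₁₂).rank := by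
      erw [hB0, h1, ← Matrix.mul_assoc]
      exact Matrix.rank_mul_le_right _ _
    have h3 : (Matrix.fromCols A₁₁ A₁₂).rank ≤ k := by
      simpa using Matrix.rank_le_card_height (Matrix.fromCols A₁₁ A₁₂)
    omega
  -- difference
  have hXY : Matrix.fromBlocks A₁₁ A₁₂ (0 : Matrix (Fin m') (Fin k) ℝ) S
      - Matrix.fromBlocks A₁₁ A₁₂ 0 0
      = Matrix.fromBlocks (0 : Matrix (Fin k) (Fin k) ℝ) 0 0 S := by
    ext (i | i) (j | j) <;> simp
  have hLz : L * Matrix.fromBlocks (0 : Matrix (Fin k) (Fin k) ℝ) 0 0 S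
      = Matrix.fromBlocks (0 : Matrix (Fin k) (Fin k) ℝ) 0 0 S := by
    rw [hL, Matrix.fromBlocks_multiply]; simp
  have hdiff : A - B₀
      = (σ.permMatrix ℝ) * Matrix.fromBlocks (0 : Matrix (Fin k) (Fin k) ℝ) 0 0 S := by
    erw [hA, hB0, Matrix.mul_assoc, Matrix.mul_assoc, ← Matrix.mul_sub, ← Matrix.mul_sub,
      hXY, hLz, hP]
  -- sv A (k+1) ≤ specNorm (A - B₀)
  have hstep1 : sv A (k + 1) ≤ specNorm (A - B₀) := by
    apply csInf_le
    · refine ⟨0, ?_⟩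
      rintro x ⟨B, -, rfl⟩
      exact norm_nonneg _
    · exact ⟨B₀, hrank, rfl⟩
  have hstep2 : specNorm (A - B₀) ≤ specNorm S := by
    rw [hdiff]; exact aux_norm σ S
  have hstep3 : specNorm S ≤ sv S 1 := by
    apply le_csInf
    · exact ⟨specNorm (S - 0), ⟨0, by simp [Matrix.rank_zero], rfl⟩⟩
    · rintro x ⟨B, hB, rfl⟩
      have hBz : B = 0 := matrix_eq_zero_of_rank_eq_zero B (Nat.lt_one_iff.mp hB)
      simp [hBz]
  linarith
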